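/- Let s_1 < s_2 < \cdots < s_n be real numbers, let \lambda be a sign vector of length n, and let f be a nonzero real polynomial with sign(f(s_i)) = \lambda_i for all i. Then f has at least m(\lambda) real roots counted with multiplicity; in particular, natDegree f \ge m(\lambda). -/

import Mathlib

open Finset

/-- `i < j` is an even gap of the sign vector `lam`: the entries at `i` and `j` are
nonzero of opposite sign, all entries strictly between are zero, and the number
`j - i - 1` of entries in between is even. -/
def IsEvenGap {n : ℕ} (lam : Fin n → SignType) (i j : Fin n) : Prop :=
  i < j ∧ lam i ≠ 0 ∧ lam j ≠ 0 ∧ lam i = -lam j ∧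
    (∀ r, i < r → r < j → lam r = 0) ∧ Even ((j : ℕ) - (i : ℕ) - 1)

/-- `i < j` is an odd gap of the sign vector `lam`: the entries at `i` and `j` are
nonzero of the same sign, all entries strictly between are zero, and the number
`j - i - 1` of entries in between is odd. -/
def IsOddGap {n : ℕ} (lam : Fin n → SignType) (i j : Fin n) : Prop :=
  i < j ∧ lam i ≠ 0 ∧ lam j ≠ 0 ∧ lam i = lam j ∧
    (∀ r, i < r → r < j → lam r = 0) ∧ Odd ((j : ℕ) - (i : ℕ) - 1)

instance {n : ℕ} (lam : Fin n → SignType) (i j : Fin n) : Decidable (IsEvenGap lam i j) := by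
  unfold IsEvenGap; infer_instance

instance {n : ℕ} (lam : Fin n → SignType) (i j : Fin n) : Decidable (IsOddGap lam i j) := by
  unfold IsOddGap; infer_instance

/-- `m(λ)`: the number of even gaps, plus the number of odd gaps, plus the number
of zero entries of the sign vector `λ`. -/
def mVal {n : ℕ} (lam : Fin n → SignType) : ℕ :=
  (univ.filter fun p : Fin n × Fin n => IsEvenGap lam p.1 p.2).card +
  (univ.filter fun p : Fin n × Fin n => IsOddGap lam p.1 p.2).card +
  (univ.filter fun i : Fin n => lam i = 0).card

open Polynomial in
/-- Sign change across an interval iff an odd number of roots (with multiplicity) inside. -/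
lemma parity_aux (k : ℕ) : ∀ (f : Polynomial ℝ), f ≠ 0 → ∀ a b : ℝ, a < b →
    f.eval a ≠ 0 → f.eval b ≠ 0 →
    (f.roots.filter (· ∈ Set.Ioo a b)).card = k →
    (Even k ↔ 0 < f.eval a * f.eval b) := by
  induction k with
  | zero =>
    intro f hf a b hab ha hb hcard
    simp only [Even.zero, true_iff]
    rcases lt_trichotomy (f.eval a * f.eval b) 0 with h | h | h
    · exfalso
      have hcont : ContinuousOn (fun x => f.eval x) (Set.Icc a b) :=
        (Polynomial.continuous f).continuousOn
      have hex : ∃ x ∈ Set.Ioo a b, f.eval x = 0 := by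
        rcases mul_neg_iff.mp h with ⟨h1, h2⟩ | ⟨h1, h2⟩
        · obtain ⟨x, hx, hfx⟩ := intermediate_value_Ioo' hab.le hcont
            (show (0:ℝ) ∈ Set.Ioo (f.eval b) (f.eval a) from ⟨h2, h1⟩)
          exact ⟨x, hx, hfx⟩
        · obtain ⟨x, hx, hfx⟩ := intermediate_value_Ioo hab.le hcont
            (show (0:ℝ) ∈ Set.Ioo (f.eval a) (f.eval b) from ⟨h1, h2⟩)
          exact ⟨x, hx, hfx⟩
      obtain ⟨x, hx, hfx⟩ := hex
      have hxr : x ∈ f.roots.filter (· ∈ Set.Ioo a b) :=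
        Multiset.mem_filter.mpr ⟨(Polynomial.mem_roots hf).mpr hfx, hx⟩
      have h0 := Multiset.card_eq_zero.mp hcard
      rw [Multiset.eq_zero_iff_forall_notMem] at h0
      exact h0 x hxr
    · exact absurd h (mul_ne_zero ha hb)
    · exact h
  | succ k ih =>
    intro f hf a b hab ha hb hcard
    have hne : f.roots.filter (· ∈ Set.Ioo a b) ≠ 0 := by
      intro h0; rw [h0] at hcard; simp at hcard
    obtain ⟨r, hr⟩ := Multiset.exists_mem_of_ne_zero hne
    rw [Multiset.mem_filter] at hr
    obtain ⟨hr_root, hr_mem⟩ := hr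
    have hroot : f.IsRoot r := (Polynomial.mem_roots hf).mp hr_root
    set g := f / (X - C r) with hg
    have hfac : (X - C r) * g = f := Polynomial.mul_div_eq_iff_isRoot.mpr hroot
    have hgne : g ≠ 0 := by
      intro h0; rw [h0, mul_zero] at hfac; exact hf hfac.symm
    have heva : f.eval a = (a - r) * g.eval a := by rw [← hfac]; simp
    have hevb : f.eval b = (b - r) * g.eval b := by rw [← hfac]; simp
    have hga : g.eval a ≠ 0 := fun h0 => ha (by rw [heva, h0, mul_zero])
    have hgb : g.eval b ≠ 0 := fun h0 => hb (by rw [hevb, h0, mul_zero])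
    have hroots : f.roots = r ::ₘ g.roots := by
      rw [← hfac, Polynomial.roots_mul (hfac.symm ▸ hf), Polynomial.roots_X_sub_C]
      simp
    have hcard' : (g.roots.filter (· ∈ Set.Ioo a b)).card = k := by
      rw [hroots, Multiset.filter_cons_of_pos _ hr_mem, Multiset.card_cons] at hcard
      exact Nat.add_right_cancel hcard
    have hIH := ih g hgne a b hab hga hgb hcard'
    have hA : a - r < 0 := by linarith [hr_mem.1]
    have hB : (0:ℝ) < b - r := by linarith [hr_mem.2]
    have hAB : (a - r) * (b - r) < 0 := mul_neg_of_neg_of_pos hA hB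
    have huv : g.eval a * g.eval b ≠ 0 := mul_ne_zero hga hgb
    rw [Nat.even_add_one, hIH, heva, hevb,
      show ((a-r) * g.eval a) * ((b-r) * g.eval b)
        = ((a-r)*(b-r)) * (g.eval a * g.eval b) from by ring]
    constructor
    · intro hneg
      have h1 : g.eval a * g.eval b < 0 := huv.lt_or_gt.resolve_right hneg
      exact mul_pos_of_neg_of_neg hAB h1
    · intro h hpos
      nlinarith

/-- Two distinct gap intervals are disjoint (one-sided version). -/
lemma gap_disjoint_aux {n : ℕ} {lam : Fin n → SignType} {s : Fin n → ℝ} (hs : StrictMono s)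
    {i j k l : Fin n} (hij : i < j) (hj : lam j ≠ 0)
    (hz1 : ∀ r, i < r → r < j → lam r = 0)
    (hkl : k < l) (hk : lam k ≠ 0) (hl : lam l ≠ 0)
    (hz2 : ∀ r, k < r → r < l → lam r = 0)
    (hik : i ≤ k) (hne : ¬(i = k ∧ j = l)) {x : ℝ}
    (hx1 : x ∈ Set.Ioo (s i) (s j)) (hx2 : x ∈ Set.Ioo (s k) (s l)) : False := by
  rcases eq_or_lt_of_le hik with rfl | hlt
  · rcases lt_trichotomy j l with h | rfl | h
    · exact hj (hz2 j hij h)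
    · exact hne ⟨rfl, rfl⟩
    · exact hl (hz1 l hkl h)
  · have hjk : j ≤ k := by
      by_contra hc
      push_neg at hc
      exact hk (hz1 k hlt hc)
    have h1 := hx1.2
    have h2 := hx2.1
    have h3 := hs.monotone hjk
    linarith

theorem mVal_le_roots_card {n : ℕ} (s : Fin n → ℝ) (hs : StrictMono s)
    (lam : Fin n → SignType) (f : Polynomial ℝ) (hf : f ≠ 0)
    (hsign : ∀ i, SignType.sign (f.eval (s i)) = lam i) :
    mVal lam ≤ f.roots.card ∧ mVal lam ≤ f.natDegree := by
  classical
  suffices main : mVal lam ≤ Multiset.card f.roots from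
    ⟨main, main.trans (Polynomial.card_roots' f)⟩
  set R := f.roots with hR
  set G : Finset (Fin n × Fin n) :=
    univ.filter (fun p : Fin n × Fin n => IsEvenGap lam p.1 p.2 ∨ IsOddGap lam p.1 p.2) with hG
  -- basic facts about members of G
  have hGap : ∀ p ∈ G, p.1 < p.2 ∧ lam p.1 ≠ 0 ∧ lam p.2 ≠ 0 ∧
      (∀ r, p.1 < r → r < p.2 → lam r = 0) := by
    intro p hp
    rw [hG, mem_filter] at hp
    rcases hp.2 with h | h
    · obtain ⟨h1, h2, h3, _, h5, _⟩ := h; exact ⟨h1, h2, h3, h5⟩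
    · obtain ⟨h1, h2, h3, _, h5, _⟩ := h; exact ⟨h1, h2, h3, h5⟩
  -- zeros of lam give roots
  have hrootz : ∀ r : Fin n, lam r = 0 → s r ∈ R := by
    intro r h
    refine (Polynomial.mem_roots hf).mpr ?_
    have : SignType.sign (f.eval (s r)) = 0 := by rw [hsign r, h]
    exact sign_eq_zero_iff.mp this
  -- nonzero lam gives nonzero eval
  have hevne : ∀ r : Fin n, lam r ≠ 0 → f.eval (s r) ≠ 0 := by
    intro r h h0
    exact h (by rw [← hsign r, h0, sign_zero])
  -- disjointness of gap intervals
  have hdisj : ∀ p ∈ G, ∀ q ∈ G, p ≠ q → ∀ x : ℝ,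
      x ∈ Set.Ioo (s p.1) (s p.2) → x ∈ Set.Ioo (s q.1) (s q.2) → False := by
    intro p hp q hq hne x hxp hxq
    obtain ⟨hp1, hp2, hp3, hp5⟩ := hGap p hp
    obtain ⟨hq1, hq2, hq3, hq5⟩ := hGap q hq
    rcases le_total p.1 q.1 with h | h
    · exact gap_disjoint_aux hs hp1 hp3 hp5 hq1 hq2 hq3 hq5 h
        (fun ⟨e1, e2⟩ => hne (Prod.ext e1 e2)) hxp hxq
    · exact gap_disjoint_aux hs hq1 hq3 hq5 hp1 hp2 hp3 hp5 h
        (fun ⟨e1, e2⟩ => hne (Prod.ext e1.symm e2.symm)) hxq hxp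
  set InG : ℝ → Prop := fun x => ∃ p ∈ G, x ∈ Set.Ioo (s p.1) (s p.2) with hInG
  -- per-gap lower bound
  have hper : ∀ p ∈ G, ((p.2 : ℕ) - (p.1 : ℕ) - 1) + 1 ≤
      (R.filter (· ∈ Set.Ioo (s p.1) (s p.2))).card := by
    intro p hp
    obtain ⟨hp1, hp2, hp3, hp5⟩ := hGap p hp
    have hslt : s p.1 < s p.2 := hs hp1
    -- at least j - i - 1 roots (the interior zeros)
    have hlow : (p.2 : ℕ) - (p.1 : ℕ) - 1 ≤
        (R.filter (· ∈ Set.Ioo (s p.1) (s p.2))).card := by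
      have h1 : (Finset.Ioo p.1 p.2).card ≤
          (R.filter (· ∈ Set.Ioo (s p.1) (s p.2))).toFinset.card := by
        apply Finset.card_le_card_of_injOn s
        · intro r hr
          rw [Finset.mem_coe, Finset.mem_Ioo] at hr
          rw [Finset.mem_coe, Multiset.mem_toFinset, Multiset.mem_filter]
          exact ⟨hrootz r (hp5 r hr.1 hr.2), hs hr.1, hs hr.2⟩
        · exact fun a _ b _ h => hs.injective h
      have h2 := Multiset.toFinset_card_le (R.filter (· ∈ Set.Ioo (s p.1) (s p.2)))
      rw [Fin.card_Ioo] at h1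
      omega
    -- parity forces one more root
    have hpar := parity_aux ((R.filter (· ∈ Set.Ioo (s p.1) (s p.2))).card) f hf
      (s p.1) (s p.2) hslt (hevne _ hp2) (hevne _ hp3) rfl
    rw [hG, mem_filter] at hp
    rcases hp.2 with h | h
    · -- even gap: opposite signs, product negative, count odd
      have hprod : f.eval (s p.1) * f.eval (s p.2) < 0 := by
        have e1 := hsign p.1
        have e2 := hsign p.2
        rw [h.2.2.2.1] at e1
        cases hl2 : lam p.2 with
        | zero => exact absurd hl2 h.2.2.1
        | neg =>
          rw [hl2] at e1 e2
          have := sign_eq_one_iff.mp (by simpa using e1)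
          have := sign_eq_neg_one_iff.mp e2
          exact mul_neg_of_pos_of_neg ‹0 < f.eval (s p.1)› ‹f.eval (s p.2) < 0›
        | pos =>
          rw [hl2] at e1 e2
          have := sign_eq_neg_one_iff.mp (by simpa using e1)
          have := sign_eq_one_iff.mp e2
          exact mul_neg_of_neg_of_pos ‹f.eval (s p.1) < 0› ‹0 < f.eval (s p.2)›
      have hodd : ¬ Even ((R.filter (· ∈ Set.Ioo (s p.1) (s p.2))).card) :=
        fun he => absurd (hpar.mp he) (not_lt.mpr hprod.le)
      have heven := h.2.2.2.2.2
      rw [Nat.even_iff] at heven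
      rw [Nat.even_iff] at hodd
      omega
    · -- odd gap: same signs, product positive, count even
      have hprod : 0 < f.eval (s p.1) * f.eval (s p.2) := by
        have e1 := hsign p.1
        have e2 := hsign p.2
        rw [h.2.2.2.1] at e1
        cases hl2 : lam p.2 with
        | zero => exact absurd hl2 h.2.2.1
        | neg =>
          rw [hl2] at e1 e2
          have := sign_eq_neg_one_iff.mp e1
          have := sign_eq_neg_one_iff.mp e2
          exact mul_pos_of_neg_of_neg ‹f.eval (s p.1) < 0› ‹f.eval (s p.2) < 0›
        | pos =>
          rw [hl2] at e1 e2
          have := sign_eq_one_iff.mp e1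
          have := sign_eq_one_iff.mp e2
          exact mul_pos ‹0 < f.eval (s p.1)› ‹0 < f.eval (s p.2)›
      have heven : Even ((R.filter (· ∈ Set.Ioo (s p.1) (s p.2))).card) := hpar.mpr hprod
      have hodd := h.2.2.2.2.2
      rw [Nat.odd_iff] at hodd
      rw [Nat.even_iff] at heven
      omega
  -- sum over gaps bounded by roots in union of gap intervals
  have hsum : (∑ p ∈ G, (R.filter (· ∈ Set.Ioo (s p.1) (s p.2))).card) ≤
      (R.filter InG).card := by
    have hle : (∑ p ∈ G, R.filter (· ∈ Set.Ioo (s p.1) (s p.2))) ≤ R.filter InG := by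
      rw [Multiset.le_iff_count]
      intro x
      rw [Multiset.count_sum', Multiset.count_filter]
      by_cases hx : InG x
      · obtain ⟨p₀, hp₀, hxp₀⟩ := hx
        rw [if_pos ⟨p₀, hp₀, hxp₀⟩]
        have hz : ∀ p ∈ G, p ≠ p₀ →
            Multiset.count x (R.filter (· ∈ Set.Ioo (s p.1) (s p.2))) = 0 := by
          intro p hp hne
          rw [Multiset.count_filter, if_neg]
          intro hxp; exact hdisj p hp p₀ hp₀ hne x hxp hxp₀
        rw [Finset.sum_eq_single_of_mem p₀ hp₀ hz, Multiset.count_filter]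
        split <;> omega
      · rw [if_neg hx]
        rw [Finset.sum_eq_zero]
        intro p hp
        rw [Multiset.count_filter, if_neg]
        intro hxp; exact hx ⟨p, hp, hxp⟩
    calc (∑ p ∈ G, (R.filter (· ∈ Set.Ioo (s p.1) (s p.2))).card)
        = Multiset.card (∑ p ∈ G, R.filter (· ∈ Set.Ioo (s p.1) (s p.2))) :=
          (Multiset.card_sum G _).symm
      _ ≤ (R.filter InG).card := Multiset.card_le_card hle
  -- zeros
  set Z : Finset (Fin n) := univ.filter (fun r : Fin n => lam r = 0) with hZdef
  set Pin : Fin n → Prop := fun r => ∃ p ∈ G, p.1 < r ∧ r < p.2 with hPin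
  have hZsplit : (Z.filter Pin).card + (Z.filter (fun r => ¬ Pin r)).card = Z.card :=
    Finset.card_filter_add_card_filter_not _
  have hZin : (Z.filter Pin).card ≤ ∑ p ∈ G, ((p.2 : ℕ) - (p.1 : ℕ) - 1) := by
    have hsub : Z.filter Pin ⊆ G.biUnion (fun p => Finset.Ioo p.1 p.2) := by
      intro r hr
      rw [Finset.mem_filter] at hr
      obtain ⟨p, hp, h1, h2⟩ := hr.2
      exact Finset.mem_biUnion.mpr ⟨p, hp, Finset.mem_Ioo.mpr ⟨h1, h2⟩⟩
    calc (Z.filter Pin).card ≤ (G.biUnion (fun p => Finset.Ioo p.1 p.2)).card :=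
          Finset.card_le_card hsub
      _ ≤ ∑ p ∈ G, (Finset.Ioo p.1 p.2).card := Finset.card_biUnion_le
      _ = ∑ p ∈ G, ((p.2 : ℕ) - (p.1 : ℕ) - 1) := by
          exact Finset.sum_congr rfl (fun p _ => Fin.card_Ioo _ _)
  have hZout : (Z.filter (fun r => ¬ Pin r)).card ≤
      (R.filter (fun x => ¬ InG x)).card := by
    have h1 : (Z.filter (fun r => ¬ Pin r)).card ≤
        (R.filter (fun x => ¬ InG x)).toFinset.card := by
      apply Finset.card_le_card_of_injOn s
      · intro r hr
        rw [Finset.mem_coe, Finset.mem_filter] at hr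
        obtain ⟨hrZ, hrP⟩ := hr
        rw [hZdef, Finset.mem_filter] at hrZ
        rw [Finset.mem_coe, Multiset.mem_toFinset, Multiset.mem_filter]
        refine ⟨hrootz r hrZ.2, ?_⟩
        intro ⟨p, hp, hxp⟩
        exact hrP ⟨p, hp, (hs.lt_iff_lt).mp hxp.1, (hs.lt_iff_lt).mp hxp.2⟩
      · exact fun a _ b _ h => hs.injective h
    exact h1.trans (Multiset.toFinset_card_le _)
  -- total roots split
  have hRsplit : (R.filter InG).card + (R.filter (fun x => ¬ InG x)).card =
      Multiset.card R := by
    rw [← Multiset.card_add, Multiset.filter_add_not]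
  -- mVal = G.card + Z.card
  have hmval : mVal lam = G.card + Z.card := by
    have hdisjEO : Disjoint
        (univ.filter fun p : Fin n × Fin n => IsEvenGap lam p.1 p.2)
        (univ.filter fun p : Fin n × Fin n => IsOddGap lam p.1 p.2) := by
      rw [Finset.disjoint_left]
      intro p hp1 hp2
      rw [Finset.mem_filter] at hp1 hp2
      obtain ⟨_, _, hne2, heq1, _, _⟩ := hp1.2
      obtain ⟨_, _, _, heq2, _, _⟩ := hp2.2
      rw [heq2] at heq1
      cases hl : lam p.2 <;> rw [hl] at heq1 hne2
      · exact hne2 rfl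
      · exact absurd heq1 (by decide)
      · exact absurd heq1 (by decide)
    rw [hG, Finset.filter_or, Finset.card_union_of_disjoint hdisjEO]
    rfl
  -- per-gap sum bound
  have hGsum : G.card + (∑ p ∈ G, ((p.2 : ℕ) - (p.1 : ℕ) - 1)) ≤
      ∑ p ∈ G, (R.filter (· ∈ Set.Ioo (s p.1) (s p.2))).card := by
    rw [Finset.card_eq_sum_ones, ← Finset.sum_add_distrib]
    exact Finset.sum_le_sum (fun p hp => by have := hper p hp; omega)
  omega
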